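/- Let F ⊆ 2^ω be a filter on ω with the Baire property in 2^ω. Then F is meager in 2^ω. -/

import Mathlib

open Set Topology Filter

/-- Pointwise xor with a fixed function, as a homeomorphism of Cantor space. -/
def xorHomeo (d : ℕ → Bool) : (ℕ → Bool) ≃ₜ (ℕ → Bool) where
  toFun x := fun n => xor (x n) (d n)
  invFun x := fun n => xor (x n) (d n)
  left_inv x := by
    funext n
    show xor (xor (x n) (d n)) (d n) = x n
    cases x n <;> cases d n <;> rfl
  right_inv x := by
    funext n
    show xor (xor (x n) (d n)) (d n) = x n
    cases x n <;> cases d n <;> rfl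
  continuous_toFun := continuous_pi fun n =>
    (continuous_of_discreteTopology (f := fun b => xor b (d n))).comp (continuous_apply n)
  continuous_invFun := continuous_pi fun n =>
    (continuous_of_discreteTopology (f := fun b => xor b (d n))).comp (continuous_apply n)

/-- Every filter on `ω` (viewed as a subset of the Cantor space `2^ω = ℕ → Bool`
via characteristic functions) with the Baire property is meager in `2^ω`. -/
theorem statement6 (F : Set (ℕ → Bool))
    (hempty : (fun _ => false) ∉ F)
    (huniv : (fun _ => true) ∈ F)
    (hmod : ∀ x ∈ F, ∀ y : ℕ → Bool, {n | x n ≠ y n}.Finite → y ∈ F)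
    (hup : ∀ x ∈ F, ∀ y : ℕ → Bool, (∀ n, x n = true → y n = true) → y ∈ F)
    (hinter : ∀ x ∈ F, ∀ y ∈ F, (fun n => x n && y n) ∈ F)
    (hBP : ∃ U : Set (ℕ → Bool), IsOpen U ∧ IsMeagre (symmDiff F U)) :
    IsMeagre F := by
  by_contra hM
  obtain ⟨U, hUo, hUm⟩ := hBP
  -- F \ U and U \ F are meager
  have hFU : IsMeagre (F \ U) := hUm.mono (fun z hz => Or.inl hz)
  have hUF : IsMeagre (U \ F) := hUm.mono (fun z hz => Or.inr hz)
  -- U is nonempty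
  have hUne : U.Nonempty := by
    by_contra h
    rw [Set.not_nonempty_iff_eq_empty] at h
    exact hM (by simpa [h] using hFU)
  obtain ⟨x, hxU⟩ := hUne
  -- find a cylinder around x inside U
  obtain ⟨I, u, hu, hpi⟩ := (isOpen_pi_iff.mp hUo) x hxU
  set C : Set (ℕ → Bool) := {y | ∀ n ∈ I, y n = x n} with hC
  have hCU : C ⊆ U := by
    intro y hy
    apply hpi
    intro n hn
    rw [hy n hn]
    exact (hu n hn).2
  have hCF : IsMeagre (C \ F) := hUF.mono (fun z hz => Set.mem_diff_of_mem (hCU hz.1) hz.2)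
  -- the (finite) set of translations supported on I
  set D : Set (ℕ → Bool) := {d | ∀ n, n ∉ I → d n = false} with hD
  have hDfin : D.Finite := by
    apply Set.Finite.subset (Set.finite_range
      (fun c : {n // n ∈ I} → Bool => fun n => if h : n ∈ I then c ⟨n, h⟩ else false))
    intro d hd
    refine ⟨fun i => d i.1, ?_⟩
    funext n
    by_cases h : n ∈ I
    · simp [h]
    · simp [h, hd n h]
  -- F is comeager
  have hres : F ∈ residual (ℕ → Bool) := by
    have hcov : Fᶜ ⊆ ⋃ d ∈ D, (xorHomeo d) ⁻¹' (C \ F) := by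
      intro y hy
      set d : ℕ → Bool := fun n => if n ∈ I then xor (y n) (x n) else false with hd
      have hdD : d ∈ D := fun n hn => by simp [hd, hn]
      refine Set.mem_biUnion hdD ?_
      have hmem : (xorHomeo d) y ∈ C := by
        intro n hn
        show xor (y n) (d n) = x n
        simp only [hd, if_pos hn]
        cases y n <;> cases x n <;> rfl
      refine ⟨hmem, ?_⟩
      intro hzF
      apply hy
      refine hmod _ hzF y ?_
      apply Set.Finite.subset I.finite_toSet
      intro n hn
      by_contra hnI
      have hnI' : n ∉ I := fun h => hnI (Finset.mem_coe.mpr h)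
      apply hn
      show xor (y n) (d n) = y n
      simp [hd, hnI']
    have : ∀ d ∈ D, ((xorHomeo d) ⁻¹' (C \ F))ᶜ ∈ residual (ℕ → Bool) := by
      intro d _
      exact IsMeagre.preimage_of_isOpenMap (xorHomeo d).continuous
        (xorHomeo d).isOpenMap hCF
    have hint : (⋂ d ∈ D, ((xorHomeo d) ⁻¹' (C \ F))ᶜ) ∈ residual (ℕ → Bool) :=
      (countable_bInter_mem hDfin.countable).mpr this
    refine mem_of_superset hint ?_
    intro z hz
    by_contra hzF
    have := hcov hzF
    rw [Set.mem_iUnion₂] at this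
    obtain ⟨d, hdD, hdz⟩ := this
    exact (Set.mem_iInter₂.mp hz d hdD) hdz
  -- the pointwise-complement preimage of F is also comeager
  set σ := xorHomeo (fun _ => true) with hσ
  have hres' : σ ⁻¹' F ∈ residual (ℕ → Bool) :=
    tendsto_residual_of_isOpenMap σ.continuous σ.isOpenMap hres
  have hne : (F ∩ σ ⁻¹' F).Nonempty :=
    (dense_of_mem_residual (inter_mem hres hres')).nonempty
  obtain ⟨y, hyF, hyσ⟩ := hne
  have : (fun n => y n && (σ y) n) ∈ F := hinter y hyF (σ y) hyσ
  have heq : (fun n => y n && (σ y) n) = (fun _ => false) := by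
    funext n
    show (y n && xor (y n) true) = false
    cases y n <;> rfl
  rw [heq] at this
  exact hempty this
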